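/- arXiv:1612.04980 — 3 statements merged into one kernel-verified Lean document; each statement's English description precedes it below -/
import Mathlib

section
/- For every n ≥ 1, the digraph D_n satisfies ddp(D_n) = n. -/
open scoped Classical

noncomputable section

/-- A finite directed graph: a finite vertex set together with an adjacency
relation whose edges join vertices of the graph. -/
structure FinDigraph (α : Type) where
  verts : Finset α
  Adj : α → α → Prop
  adj_mem : ∀ u v, Adj u v → u ∈ verts ∧ v ∈ verts

namespace FinDigraph

variable {α β : Type}

/-- The out-neighbourhood `N⁺_D(v)`. -/
def outNbhd (D : FinDigraph α) (v : α) : Set α := {u | D.Adj v u}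

/-- The set of vertices reachable from `s` by a (possibly trivial) directed path. -/
def reachSet (D : FinDigraph α) (s : α) : Finset α :=
  D.verts.filter fun v => Relation.ReflTransGen D.Adj s v

/-- A reachable fragment: an inclusion-maximal set among the reachable sets. -/
def IsFragment (D : FinDigraph α) (R : Finset α) : Prop :=
  (∃ s ∈ D.verts, R = D.reachSet s) ∧
  ∀ s ∈ D.verts, R ⊆ D.reachSet s → R = D.reachSet s

/-- The collection of all reachable fragments of `D`. -/
def fragments (D : FinDigraph α) : Finset (Finset α) :=
  D.verts.powerset.filter fun R => D.IsFragment R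

/-- The induced subdigraph `D[S]`. -/
def induce (D : FinDigraph α) (S : Finset α) : FinDigraph α where
  verts := D.verts ∩ S
  Adj u v := D.Adj u v ∧ u ∈ S ∧ v ∈ S
  adj_mem := fun u v h => ⟨Finset.mem_inter.mpr ⟨(D.adj_mem u v h.1).1, h.2.1⟩,
    Finset.mem_inter.mpr ⟨(D.adj_mem u v h.1).2, h.2.2⟩⟩

/-- Deletion of a vertex: `D − v = D[V(D) ∖ {v}]`. -/
def deleteVert (D : FinDigraph α) (v : α) : FinDigraph α :=
  D.induce (D.verts.erase v)

/-- Fuel-based helper for DAG-depth; the fuel `|V(D)|` always suffices since each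
recursive call strictly decreases the number of vertices. -/
def ddpAux : ℕ → FinDigraph α → ℕ
  | 0, _ => 0
  | n+1, D =>
    if hcard : D.verts.card ≤ 1 then 1
    else if D.fragments.card = 1 then
      1 + D.verts.inf' (Finset.card_pos.mp (by omega)) fun v => ddpAux n (D.deleteVert v)
    else
      D.fragments.sup fun R => ddpAux n (D.induce R)

/-- The DAG-depth of a digraph. -/
def ddp (D : FinDigraph α) : ℕ := ddpAux D.verts.card D

/-- A DAG: a (finite) digraph with no directed cycles. -/
def IsDag (P : FinDigraph α) : Prop := ∀ v, ¬ Relation.TransGen P.Adj v v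

/-- A root of a DAG: a vertex of indegree zero. -/
def IsRoot (P : FinDigraph α) (r : α) : Prop := r ∈ P.verts ∧ ∀ u, ¬ P.Adj u r

/-- `y` is a descendant of `x`: there is a (possibly trivial) directed path from `x` to `y`. -/
def Desc (P : FinDigraph α) (x y : α) : Prop := Relation.ReflTransGen P.Adj x y

/-- `l` is a directed path in `P` starting at a root of `P` and ending at `v`. -/
def IsRootPath (P : FinDigraph α) (l : List α) (v : α) : Prop :=
  l ≠ [] ∧ l.Chain' P.Adj ∧ (∀ x ∈ l, x ∈ P.verts) ∧
  (∃ r, l.head? = some r ∧ P.IsRoot r) ∧ l.getLast? = some v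

/-- The depth of a DAG: the maximum number of vertices on a directed path. -/
def depth (P : FinDigraph α) : ℕ :=
  sSup {n : ℕ | ∃ l : List α, l.Chain' P.Adj ∧ (∀ x ∈ l, x ∈ P.verts) ∧ l.length = n}

/-- The Neighbor cover condition for a DAG-depth decomposition `(P, org)` of `D`. -/
def NeighborCover (D : FinDigraph α) (P : FinDigraph β) (org : β → α) : Prop :=
  ∀ v' ∈ P.verts, ∀ u, D.Adj (org v') u →
    (∃ u' ∈ P.verts, org u' = u ∧ P.Desc v' u') ∨
    (∀ l, P.IsRootPath l v' → ∃ u' ∈ l, org u' = u)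

/-- `(P, org)` is a valid DAG-depth decomposition of `D`: `P` is a DAG, `org` maps
`V(P)` onto `V(D)`, and the Neighbor cover condition holds. -/
def IsValidDecomp (D : FinDigraph α) (P : FinDigraph β) (org : β → α) : Prop :=
  P.IsDag ∧ (∀ v' ∈ P.verts, org v' ∈ D.verts) ∧
  (∀ v ∈ D.verts, ∃ v' ∈ P.verts, org v' = v) ∧
  NeighborCover D P org

end FinDigraph

namespace FinDigraph

/-- The digraph `Dn n` with vertices `a_1, …, a_n, b_1, …, b_n`, where `a_i = (i, false)`
and `b_i = (i, true)`, and edges `(x_i, y_j)` for all `1 ≤ i < j ≤ n` and all choices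
`x, y ∈ {a, b}`. -/
def Dn (n : ℕ) : FinDigraph (ℕ × Bool) where
  verts := Finset.Icc 1 n ×ˢ Finset.univ
  Adj u v := 1 ≤ u.1 ∧ u.1 < v.1 ∧ v.1 ≤ n
  adj_mem := by
    intro u v h
    simp only [Finset.mem_product, Finset.mem_Icc, Finset.mem_univ, and_true]
    omega

end FinDigraph

local instance (priority := 1100) : DecidableEq (ℕ × Bool) := fun a b => Classical.propDecidable _

namespace FinDigraph

lemma FD_ext {α : Type} {D₁ D₂ : FinDigraph α} (h1 : D₁.verts = D₂.verts)
    (h2 : D₁.Adj = D₂.Adj) : D₁ = D₂ := by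
  cases D₁; cases D₂; cases h1; cases h2; rfl

lemma induce_verts {α : Type} (D : FinDigraph α) (S : Finset α) :
    (D.induce S).verts = D.verts ∩ S := by
  unfold induce; rfl

lemma induce_adj {α : Type} {D : FinDigraph α} {S : Finset α} {u v : α} :
    (D.induce S).Adj u v ↔ (D.Adj u v ∧ u ∈ S ∧ v ∈ S) := by
  unfold induce; rfl

lemma induce_adj_eq {α : Type} (D : FinDigraph α) (S : Finset α) :
    (D.induce S).Adj = fun u v => D.Adj u v ∧ u ∈ S ∧ v ∈ S := by
  unfold induce; rfl

lemma deleteVert_eq {α : Type} (D : FinDigraph α) (v : α) :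
    D.deleteVert v = D.induce (D.verts.erase v) := rfl

lemma mem_Dn_verts {n : ℕ} {u : ℕ × Bool} : u ∈ (Dn n).verts ↔ 1 ≤ u.1 ∧ u.1 ≤ n := by
  unfold Dn; simp

lemma Dn_adj {n : ℕ} {u v : ℕ × Bool} :
    (Dn n).Adj u v ↔ 1 ≤ u.1 ∧ u.1 < v.1 ∧ v.1 ≤ n := by
  unfold Dn; rfl

lemma Dn_induce_induce {n : ℕ} {S R : Finset (ℕ × Bool)} (h : R ⊆ S) :
    ((Dn n).induce S).induce R = (Dn n).induce R := by
  apply FD_ext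
  · rw [induce_verts, induce_verts, induce_verts]
    ext x
    simp only [Finset.mem_inter]
    exact ⟨fun ⟨⟨a, _⟩, c⟩ => ⟨a, c⟩, fun ⟨a, c⟩ => ⟨⟨a, h c⟩, c⟩⟩
  · simp only [induce_adj_eq]
    funext u v
    simp only [eq_iff_iff]
    exact ⟨fun ⟨⟨a, _⟩, hu, hv⟩ => ⟨a, hu, hv⟩, fun ⟨a, hu, hv⟩ => ⟨⟨a, h hu, h hv⟩, hu, hv⟩⟩

lemma Dn_induce_delete {n : ℕ} {S : Finset (ℕ × Bool)} (v : ℕ × Bool) :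
    ((Dn n).induce S).deleteVert v = (Dn n).induce (S.erase v) := by
  rw [deleteVert_eq]
  apply FD_ext
  · simp only [induce_verts]
    ext x
    simp only [Finset.mem_inter, Finset.mem_erase]
    tauto
  · simp only [induce_adj_eq]
    funext u w
    simp only [eq_iff_iff, induce_verts, Finset.mem_erase, Finset.mem_inter]
    constructor
    · tauto
    · rintro ⟨ha, hu, hw⟩
      obtain ⟨h1, h2, h3⟩ := Dn_adj.mp ha
      have hu' : u ∈ (Dn n).verts := mem_Dn_verts.2 ⟨h1, by omega⟩
      have hw' : w ∈ (Dn n).verts := mem_Dn_verts.2 ⟨by omega, h3⟩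
      tauto

lemma Dn_induce_self {n : ℕ} : (Dn n).induce (Dn n).verts = Dn n := by
  apply FD_ext
  · rw [induce_verts]
    exact Finset.inter_self _
  · rw [induce_adj_eq]
    funext u v
    apply propext
    constructor
    · exact fun h => h.1
    · intro h
      obtain ⟨h1, h2, h3⟩ := Dn_adj.mp h
      exact ⟨h, mem_Dn_verts.2 ⟨h1, by omega⟩, mem_Dn_verts.2 ⟨by omega, h3⟩⟩

lemma Dn_rtg {n : ℕ} {S : Finset (ℕ × Bool)} {s v : ℕ × Bool}
    (h : Relation.ReflTransGen ((Dn n).induce S).Adj s v) :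
    v = s ∨ ((Dn n).induce S).Adj s v := by
  induction h with
  | refl => exact Or.inl rfl
  | tail hab hbc ih =>
    rcases ih with rfl | hsb
    · exact Or.inr hbc
    · obtain ⟨ha1, hb1, hb2⟩ := induce_adj.mp hsb
      obtain ⟨ha2, hb3, hc⟩ := induce_adj.mp hbc
      obtain ⟨x1, x2, x3⟩ := Dn_adj.mp ha1
      obtain ⟨y1, y2, y3⟩ := Dn_adj.mp ha2
      exact Or.inr (induce_adj.mpr ⟨Dn_adj.mpr ⟨x1, by omega, y3⟩, hb1, hc⟩)

lemma Dn_mem_reachSet {n : ℕ} {S : Finset (ℕ × Bool)} {s v : ℕ × Bool}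
    (hs : s ∈ (Dn n).verts ∩ S) :
    v ∈ ((Dn n).induce S).reachSet s ↔ v ∈ (Dn n).verts ∩ S ∧ (v = s ∨ s.1 < v.1) := by
  constructor
  · intro h
    simp only [reachSet, Finset.mem_filter, induce_verts] at h
    obtain ⟨hv, hrtg⟩ := h
    refine ⟨hv, ?_⟩
    rcases Dn_rtg hrtg with rfl | hadj
    · exact Or.inl rfl
    · exact Or.inr (Dn_adj.mp (induce_adj.mp hadj).1).2.1
  · rintro ⟨hv, rfl | hlt⟩
    · simp only [reachSet, Finset.mem_filter, induce_verts]
      exact ⟨hv, Relation.ReflTransGen.refl⟩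
    · simp only [reachSet, Finset.mem_filter, induce_verts]
      refine ⟨hv, Relation.ReflTransGen.single ?_⟩
      rw [Finset.mem_inter, mem_Dn_verts] at hs hv
      exact induce_adj.mpr ⟨Dn_adj.mpr ⟨hs.1.1, hlt, hv.1.2⟩, hs.2, hv.2⟩

end FinDigraph
namespace FinDigraph

lemma Dn_fragments_eq {n : ℕ} {S : Finset (ℕ × Bool)} {μ : ℕ}
    (hmin : ∀ v ∈ (Dn n).verts ∩ S, μ ≤ v.1)
    (hex : ∃ w ∈ (Dn n).verts ∩ S, w.1 = μ) :
    ((Dn n).induce S).fragments =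
      (((Dn n).verts ∩ S).filter fun v => v.1 = μ).image ((Dn n).induce S).reachSet := by
  obtain ⟨w, hw, hwμ⟩ := hex
  ext R
  simp only [fragments, Finset.mem_filter, Finset.mem_powerset, Finset.mem_image, IsFragment,
    induce_verts]
  constructor
  · rintro ⟨hsub, ⟨s', hs', hR⟩, hmax⟩
    by_cases hcase : s'.1 = μ
    · exact ⟨s', ⟨hs', hcase⟩, hR.symm⟩
    · have hlt : μ < s'.1 := lt_of_le_of_ne (hmin s' hs') (Ne.symm hcase)
      have hsub2 : R ⊆ ((Dn n).induce S).reachSet w := by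
        intro v hv
        rw [hR] at hv
        rw [Dn_mem_reachSet hs'] at hv
        rw [Dn_mem_reachSet hw]
        refine ⟨hv.1, Or.inr ?_⟩
        rcases hv.2 with rfl | h
        · omega
        · omega
      exact ⟨w, ⟨hw, hwμ⟩, (hmax w hw hsub2).symm⟩
  · rintro ⟨t, ⟨ht, htμ⟩, rfl⟩
    refine ⟨?_, ⟨t, ht, rfl⟩, ?_⟩
    · intro v hv
      exact ((Dn_mem_reachSet ht).1 hv).1
    · intro s' hs' hsub
      have htmem : t ∈ ((Dn n).induce S).reachSet t := (Dn_mem_reachSet ht).2 ⟨ht, Or.inl rfl⟩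
      have h2 := hsub htmem
      rw [Dn_mem_reachSet hs'] at h2
      rcases h2.2 with h | hlt
      · rw [h]
      · exact absurd hlt (by have := hmin s' hs'; omega)

end FinDigraph
namespace FinDigraph

lemma Dn_reach_pair {n : ℕ} {S : Finset (ℕ × Bool)} {μ : ℕ} {s t : ℕ × Bool}
    (hmin : ∀ v ∈ (Dn n).verts ∩ S, μ ≤ v.1)
    (hsT : s ∈ (Dn n).verts ∩ S) (htT : t ∈ (Dn n).verts ∩ S)
    (hsμ : s.1 = μ) (htμ : t.1 = μ) (hst : s ≠ t)
    (hpair : ∀ v ∈ (Dn n).verts ∩ S, v.1 = μ → v = s ∨ v = t) :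
    ((Dn n).induce S).reachSet s = ((Dn n).verts ∩ S).erase t := by
  ext v
  rw [Dn_mem_reachSet hsT]
  simp only [Finset.mem_erase]
  constructor
  · rintro ⟨hvT, rfl | hlt⟩
    · exact ⟨hst, hvT⟩
    · refine ⟨?_, hvT⟩
      intro hvt
      rw [hvt] at hlt
      omega
  · rintro ⟨hvt, hvT⟩
    refine ⟨hvT, ?_⟩
    by_cases hvμ : v.1 = μ
    · rcases hpair v hvT hvμ with rfl | rfl
      · exact Or.inl rfl
      · exact absurd rfl hvt
    · exact Or.inr (by have := hmin v hvT; omega)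

lemma Dn_key (n : ℕ) : ∀ m (S : Finset (ℕ × Bool)),
    ((Dn n).verts ∩ S).Nonempty → ((Dn n).verts ∩ S).card ≤ m →
    ddpAux m ((Dn n).induce S) = (((Dn n).verts ∩ S).image Prod.fst).card := by
  intro m
  induction m with
  | zero =>
    intro S hne hc
    have := Finset.card_pos.mpr hne
    omega
  | succ m ih =>
    intro S hne hc
    have hverts : ((Dn n).induce S).verts = (Dn n).verts ∩ S := induce_verts _ _
    rw [ddpAux]
    by_cases h1 : ((Dn n).induce S).verts.card ≤ 1
    · rw [dif_pos h1]
      rw [hverts] at h1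
      have hcard1 : ((Dn n).verts ∩ S).card = 1 :=
        le_antisymm h1 (Finset.card_pos.mpr hne)
      obtain ⟨a, ha⟩ := Finset.card_eq_one.mp hcard1
      rw [ha, Finset.image_singleton, Finset.card_singleton]
    · rw [dif_neg h1]
      rw [hverts] at h1
      have h2 : 2 ≤ ((Dn n).verts ∩ S).card := by omega
      have hLne : (((Dn n).verts ∩ S).image Prod.fst).Nonempty := hne.image _
      set μ := ((((Dn n).verts ∩ S)).image Prod.fst).min' hLne with hμdef
      have hmin : ∀ v ∈ (Dn n).verts ∩ S, μ ≤ v.1 := fun v hv =>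
        Finset.min'_le _ _ (Finset.mem_image_of_mem _ hv)
      have hexμ : ∃ w ∈ (Dn n).verts ∩ S, w.1 = μ := by
        have h := Finset.min'_mem ((((Dn n).verts ∩ S)).image Prod.fst) hLne
        rw [Finset.mem_image] at h
        obtain ⟨w, hw, hwe⟩ := h
        exact ⟨w, hw, hwe⟩
      have hμL : μ ∈ ((Dn n).verts ∩ S).image Prod.fst := by
        obtain ⟨w, hw, hwe⟩ := hexμ
        exact Finset.mem_image.mpr ⟨w, hw, hwe⟩
      have hLpos : 1 ≤ (((Dn n).verts ∩ S).image Prod.fst).card :=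
        Finset.card_pos.mpr hLne
      have hfrag := Dn_fragments_eq (n := n) (S := S) (μ := μ) hmin hexμ
      have hMmem : ∀ v, v ∈ ((Dn n).verts ∩ S).filter (fun v => v.1 = μ) ↔
          v ∈ (Dn n).verts ∩ S ∧ v.1 = μ := fun v => Finset.mem_filter
      have hinj : Set.InjOn ((Dn n).induce S).reachSet
          ↑(((Dn n).verts ∩ S).filter (fun v => v.1 = μ)) := by
        intro x hx y hy hxy
        obtain ⟨hxT, hxμ⟩ := (hMmem x).mp (Finset.mem_coe.mp hx)
        obtain ⟨hyT, hyμ⟩ := (hMmem y).mp (Finset.mem_coe.mp hy)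
        have hxR : x ∈ ((Dn n).induce S).reachSet x :=
          (Dn_mem_reachSet hxT).mpr ⟨hxT, Or.inl rfl⟩
        rw [hxy, Dn_mem_reachSet hyT] at hxR
        rcases hxR.2 with h | h
        · exact h
        · omega
      have hfc : ((Dn n).induce S).fragments.card
          = (((Dn n).verts ∩ S).filter (fun v => v.1 = μ)).card := by
        rw [hfrag]
        exact Finset.card_image_of_injOn hinj
      have hMne : (((Dn n).verts ∩ S).filter (fun v => v.1 = μ)).Nonempty := by
        obtain ⟨w, hw, hwe⟩ := hexμ
        exact ⟨w, (hMmem w).mpr ⟨hw, hwe⟩⟩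
      have hM2 : (((Dn n).verts ∩ S).filter (fun v => v.1 = μ)).card ≤ 2 := by
        have hsub : ((Dn n).verts ∩ S).filter (fun v => v.1 = μ)
            ⊆ {(μ, false), (μ, true)} := by
          intro v hv
          obtain ⟨hvT, hvμ⟩ := (hMmem v).mp hv
          obtain ⟨a, b⟩ := v
          simp only [Finset.mem_insert, Finset.mem_singleton]
          cases b <;> simp_all
        calc (((Dn n).verts ∩ S).filter (fun v => v.1 = μ)).card
            ≤ ({(μ, false), (μ, true)} : Finset (ℕ × Bool)).card := Finset.card_le_card hsub
          _ ≤ 2 := by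
              refine le_trans (Finset.card_insert_le _ _) ?_
              simp
      -- value of each deletion / induced fragment, via the induction hypothesis
      have hval : ∀ v ∈ (Dn n).verts ∩ S,
          ddpAux m (((Dn n).induce S).deleteVert v)
            = ((((Dn n).verts ∩ S).erase v).image Prod.fst).card := by
        intro v hv
        rw [Dn_induce_delete]
        have hTv : (Dn n).verts ∩ (S.erase v) = ((Dn n).verts ∩ S).erase v := by
          ext x
          simp only [Finset.mem_inter, Finset.mem_erase]
          tauto
        have hne' : ((Dn n).verts ∩ S.erase v).Nonempty := by
          rw [hTv, ← Finset.card_pos, Finset.card_erase_of_mem hv]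
          omega
        have hc' : ((Dn n).verts ∩ S.erase v).card ≤ m := by
          rw [hTv, Finset.card_erase_of_mem hv]
          omega
        have hkey := ih (S.erase v) hne' hc'
        rw [hTv] at hkey
        exact hkey
      by_cases hM1 : ((Dn n).induce S).fragments.card = 1
      · rw [if_pos hM1]
        rw [hfc] at hM1
        obtain ⟨s, hsM⟩ := Finset.card_eq_one.mp hM1
        have hsMem : s ∈ ((Dn n).verts ∩ S).filter (fun v => v.1 = μ) := by
          rw [hsM]; exact Finset.mem_singleton_self s
        obtain ⟨hsT, hsμ⟩ := (hMmem s).mp hsMem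
        have huniq : ∀ v ∈ (Dn n).verts ∩ S, v.1 = μ → v = s := by
          intro v hv hvμ
          have hvM : v ∈ ((Dn n).verts ∩ S).filter (fun v => v.1 = μ) :=
            (hMmem v).mpr ⟨hv, hvμ⟩
          rw [hsM] at hvM
          exact Finset.mem_singleton.mp hvM
        have hsVerts : s ∈ ((Dn n).induce S).verts := by rw [hverts]; exact hsT
        show 1 + Finset.inf' ((Dn n).induce S).verts ⟨s, hsVerts⟩
            (fun v => ddpAux m (((Dn n).induce S).deleteVert v))
          = (((Dn n).verts ∩ S).image Prod.fst).card
        have himg : (((Dn n).verts ∩ S).erase s).image Prod.fst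
            = (((Dn n).verts ∩ S).image Prod.fst).erase μ := by
          ext ℓ
          simp only [Finset.mem_image, Finset.mem_erase]
          constructor
          · rintro ⟨x, ⟨hxs, hxT⟩, rfl⟩
            exact ⟨fun hxμ => hxs (huniq x hxT hxμ), x, hxT, rfl⟩
          · rintro ⟨hℓ, x, hx, rfl⟩
            exact ⟨x, ⟨fun h => hℓ (by rw [h]; exact hsμ), hx⟩, rfl⟩
        have e1 : Finset.inf' ((Dn n).induce S).verts ⟨s, hsVerts⟩
            (fun v => ddpAux m (((Dn n).induce S).deleteVert v))
            ≤ (((Dn n).verts ∩ S).image Prod.fst).card - 1 := by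
          refine le_trans (Finset.inf'_le _ hsVerts) ?_
          rw [hval s hsT, himg, Finset.card_erase_of_mem hμL]
        have e2 : (((Dn n).verts ∩ S).image Prod.fst).card - 1
            ≤ Finset.inf' ((Dn n).induce S).verts ⟨s, hsVerts⟩
              (fun v => ddpAux m (((Dn n).induce S).deleteVert v)) := by
          refine Finset.le_inf' _ _ ?_
          intro v hv
          rw [hverts] at hv
          rw [hval v hv]
          have hsub : ((Dn n).verts ∩ S).image Prod.fst
              ⊆ insert v.1 ((((Dn n).verts ∩ S).erase v).image Prod.fst) := by
            intro ℓ hℓ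
            rw [Finset.mem_image] at hℓ
            obtain ⟨x, hx, rfl⟩ := hℓ
            by_cases hxv : x = v
            · rw [hxv]; exact Finset.mem_insert_self _ _
            · exact Finset.mem_insert_of_mem
                (Finset.mem_image_of_mem _ (Finset.mem_erase.mpr ⟨hxv, hx⟩))
          have hb := Finset.card_le_card hsub
          have hb2 := Finset.card_insert_le v.1
            ((((Dn n).verts ∩ S).erase v).image Prod.fst)
          omega
        omega
      · rw [if_neg hM1]
        rw [hfc] at hM1
        have hM2' : (((Dn n).verts ∩ S).filter (fun v => v.1 = μ)).card = 2 := by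
          have := Finset.card_pos.mpr hMne
          omega
        obtain ⟨s, t, hst, hMst⟩ := Finset.card_eq_two.mp hM2'
        have hsMem : s ∈ ((Dn n).verts ∩ S).filter (fun v => v.1 = μ) := by
          rw [hMst]; simp
        have htMem : t ∈ ((Dn n).verts ∩ S).filter (fun v => v.1 = μ) := by
          rw [hMst]; simp
        obtain ⟨hsT, hsμ⟩ := (hMmem s).mp hsMem
        obtain ⟨htT, htμ⟩ := (hMmem t).mp htMem
        have hpair : ∀ v ∈ (Dn n).verts ∩ S, v.1 = μ → v = s ∨ v = t := by
          intro v hv hvμ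
          have hvM : v ∈ ((Dn n).verts ∩ S).filter (fun v => v.1 = μ) :=
            (hMmem v).mpr ⟨hv, hvμ⟩
          rw [hMst] at hvM
          simpa using hvM
        have hRs := Dn_reach_pair hmin hsT htT hsμ htμ hst hpair
        have hRt := Dn_reach_pair hmin htT hsT htμ hsμ hst.symm
          (fun v hv hvμ => (hpair v hv hvμ).symm)
        have hfrag2 : ((Dn n).induce S).fragments
            = {((Dn n).verts ∩ S).erase t, ((Dn n).verts ∩ S).erase s} := by
          rw [hfrag, hMst, Finset.image_insert, Finset.image_singleton, hRs, hRt]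
        rw [hfrag2, Finset.sup_insert, Finset.sup_singleton]
        have hcompute : ∀ x y : ℕ × Bool, x ∈ (Dn n).verts ∩ S → y ∈ (Dn n).verts ∩ S →
            x ≠ y → x.1 = y.1 →
            ddpAux m (((Dn n).induce S).induce (((Dn n).verts ∩ S).erase y))
              = (((Dn n).verts ∩ S).image Prod.fst).card := by
          intro x y hx hy hxy hxy1
          rw [Dn_induce_induce (by
            intro z hz
            simp only [Finset.mem_erase, Finset.mem_inter] at hz
            exact hz.2.2)]
          have hTv : (Dn n).verts ∩ (((Dn n).verts ∩ S).erase y)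
              = ((Dn n).verts ∩ S).erase y := by
            apply Finset.inter_eq_right.mpr
            intro z hz
            simp only [Finset.mem_erase, Finset.mem_inter] at hz
            exact hz.2.1
          have hxE : x ∈ ((Dn n).verts ∩ S).erase y := Finset.mem_erase.mpr ⟨hxy, hx⟩
          have hne' : ((Dn n).verts ∩ (((Dn n).verts ∩ S).erase y)).Nonempty := by
            rw [hTv]; exact ⟨x, hxE⟩
          have hc' : ((Dn n).verts ∩ (((Dn n).verts ∩ S).erase y)).card ≤ m := by
            rw [hTv, Finset.card_erase_of_mem hy]
            omega
          have hkey := ih (((Dn n).verts ∩ S).erase y) hne' hc'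
          rw [hTv] at hkey
          rw [hkey]
          congr 1
          ext ℓ
          simp only [Finset.mem_image]
          constructor
          · rintro ⟨z, hz, rfl⟩
            exact ⟨z, (Finset.mem_erase.mp hz).2, rfl⟩
          · rintro ⟨z, hz, rfl⟩
            by_cases hzy : z = y
            · exact ⟨x, hxE, by rw [hzy]; exact hxy1⟩
            · exact ⟨z, Finset.mem_erase.mpr ⟨hzy, hz⟩, rfl⟩
        rw [hcompute s t hsT htT hst (by omega), hcompute t s htT hsT hst.symm (by omega)]
        exact max_self _

end FinDigraph
open FinDigraph in
/-- For every `n ≥ 1`, the digraph `Dn n` satisfies `ddp (Dn n) = n`. -/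
theorem ddp_Dn (n : ℕ) (hn : 1 ≤ n) : ddp (Dn n) = n := by
  have hself := Dn_induce_self (n := n)
  have hV : (Dn n).verts ∩ (Dn n).verts = (Dn n).verts := Finset.inter_self _
  have hne : ((Dn n).verts ∩ (Dn n).verts).Nonempty := by
    rw [hV]
    exact ⟨(1, false), mem_Dn_verts.2 ⟨le_refl 1, hn⟩⟩
  have hc : ((Dn n).verts ∩ (Dn n).verts).card ≤ (Dn n).verts.card := by rw [hV]
  have hkey := Dn_key n ((Dn n).verts.card) (Dn n).verts hne hc
  rw [hself, hV] at hkey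
  unfold ddp
  rw [hkey]
  have himg : (Dn n).verts.image Prod.fst = Finset.Icc 1 n := by
    ext x
    simp only [Finset.mem_image]
    constructor
    · rintro ⟨u, hu, rfl⟩
      exact Finset.mem_Icc.mpr (mem_Dn_verts.mp hu)
    · intro hx
      exact ⟨(x, false), mem_Dn_verts.2 (Finset.mem_Icc.mp hx), rfl⟩
  rw [himg, Nat.card_Icc]
  omega
end
end

section
/- Let (P, org) be a valid DAG-depth decomposition of a finite digraph D, and define the digraph C with V(C) = V(D) and (u,v) ∈ E(C) if and only if for every u' ∈ V(P) with org(u') = u, either (1) there exists v' ∈ V(P) with org(v') = v such that v' is a descendant of u' in P, or (2) every directed path in P from a root of P to u' contains a vertex w' with org(w') = v. Then E(D) ⊆ E(C) and (P, org) is a valid DAG-depth decomposition of C; that is, C is a partial closure of (P, org). -/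
open scoped Classical

noncomputable section

namespace FinDigraph

/-- The closure candidate of a DAG-depth decomposition `(P, org)` of `D`:
`V(C) = V(D)`, and `(u, v) ∈ E(C)` iff for every copy `u'` of `u` in `P`, either some
copy of `v` is a descendant of `u'`, or every path from a root of `P` to `u'`
contains a copy of `v`. -/
def closureOf {α β : Type} (D : FinDigraph α) (P : FinDigraph β) (org : β → α) :
    FinDigraph α where
  verts := D.verts
  Adj u v := u ∈ D.verts ∧ v ∈ D.verts ∧
    ∀ u' ∈ P.verts, org u' = u →
      ((∃ v' ∈ P.verts, org v' = v ∧ P.Desc u' v') ∨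
       (∀ l, P.IsRootPath l u' → ∃ w' ∈ l, org w' = v))
  adj_mem := fun _ _ h => ⟨h.1, h.2.1⟩

end FinDigraph

open FinDigraph in
/-- For a valid DAG-depth decomposition `(P, org)` of `D`, the digraph `C = closureOf D P org`
satisfies `E(D) ⊆ E(C)` and `(P, org)` is still a valid DAG-depth decomposition of `C`;
that is, `C` is a partial closure of `(P, org)`. -/
theorem closureOf_is_partial_closure {α β : Type} (D : FinDigraph α)
    (P : FinDigraph β) (org : β → α) (h : IsValidDecomp D P org) :
    (∀ u v, D.Adj u v → (closureOf D P org).Adj u v) ∧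
    IsValidDecomp (closureOf D P org) P org := by
  obtain ⟨hdag, hmem, hsurj, hcov⟩ := h
  constructor
  · intro u v huv
    exact ⟨(D.adj_mem u v huv).1, (D.adj_mem u v huv).2,
      fun u' hu' he => hcov u' hu' v (he ▸ huv)⟩
  · exact ⟨hdag, hmem, hsurj, fun v' hv' u hadj => hadj.2.2 v' hv' rfl⟩
end
end

section
/- Let (P, org) be a valid DAG-depth decomposition of a finite digraph D, and let C be the digraph with V(C) = V(D) and (u,v) ∈ E(C) if and only if for every u' ∈ V(P) with org(u') = u, either (1) there exists v' ∈ V(P) with org(v') = v such that v' is a descendant of u' in P, or (2) every directed path in P from a root of P to u' contains a vertex w' with org(w') = v. Then for every digraph C' with V(C') = V(D), the pair (P, org) is a valid DAG-depth decomposition of C' if and only if E(C') ⊆ E(C). Consequently, C is the unique closure of (P, org). -/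
open scoped Classical

noncomputable section

open FinDigraph in
/-- For a valid DAG-depth decomposition `(P, org)` of `D`, and `C = closureOf D P org`:
a digraph `C'` with `V(C') = V(D)` admits `(P, org)` as a valid DAG-depth decomposition
iff `E(C') ⊆ E(C)`.  Consequently `C` is the unique closure of `(P, org)`. -/
theorem closureOf_is_closure {α β : Type} (D : FinDigraph α)
    (P : FinDigraph β) (org : β → α) (h : IsValidDecomp D P org) :
    ∀ C' : FinDigraph α, C'.verts = D.verts →
      (IsValidDecomp C' P org ↔ ∀ u v, C'.Adj u v → (closureOf D P org).Adj u v) := by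
  intro C' hV
  obtain ⟨hdag, hmem, hsurj, _⟩ := h
  constructor
  · rintro ⟨_, _, _, hnc⟩ u v huv
    have hu : u ∈ D.verts := hV ▸ (C'.adj_mem u v huv).1
    have hv : v ∈ D.verts := hV ▸ (C'.adj_mem u v huv).2
    exact ⟨hu, hv, fun u' hu' horg => hnc u' hu' v (horg ▸ huv)⟩
  · intro hsub
    refine ⟨hdag, fun v' hv' => hV ▸ hmem v' hv', fun v hv => hsurj v (hV ▸ hv),
      fun v' hv' u huv => ?_⟩
    exact (hsub _ _ huv).2.2 v' hv' rfl
end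
end
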